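/- arXiv:1805.07209 — 9 statements merged into one kernel-verified Lean document; each statement's English description precedes it below -/
import Mathlib

section
/- Let α ≥ 2 and β ≥ 1 be integers, let R be an (α,β)-ruling edge set of a finite simple graph G = (V,E), and let s be a function assigning to each edge of R one of its two endpoints. Then the set S consisting of all chosen endpoints s(e) for e ∈ R together with all isolated vertices of G is an (α−1, β+1)-ruling set of G. -/
open SimpleGraph

/-- The line graph of `G` on the type `Sym2 V`: two distinct edges of `G` are adjacent
iff they share an endpoint. Elements of `Sym2 V` that are not edges of `G` are isolated. -/
def lineG {V : Type*} (G : SimpleGraph V) : SimpleGraph (Sym2 V) where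
  Adj e f := e ≠ f ∧ e ∈ G.edgeSet ∧ f ∈ G.edgeSet ∧ ∃ v, v ∈ e ∧ v ∈ f
  symm := by
    constructor
    rintro e f ⟨hne, he, hf, v, hv1, hv2⟩
    exact ⟨hne.symm, hf, he, v, hv2, hv1⟩
  loopless := by
    constructor
    rintro e ⟨h, -⟩
    exact h rfl

/-- Line-graph distance between two edges, `∞` if not connected. -/
noncomputable def edistE {V : Type*} (G : SimpleGraph V) (e f : Sym2 V) : ℕ∞ :=
  (lineG G).edist e f

/-- Line-graph distance from an edge to a set of edges; `∞` if the set is empty. -/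
noncomputable def edistSet {V : Type*} (G : SimpleGraph V) (e : Sym2 V)
    (R : Set (Sym2 V)) : ℕ∞ :=
  ⨅ f ∈ R, edistE G e f

/-- `R` is an `(α,β)`-ruling set of `G`: any two distinct nodes of `R` are at distance
at least `α` and every node is at distance at most `β` from some node of `R`. -/
def IsRulingSet {V : Type*} (G : SimpleGraph V) (α β : ℕ) (R : Set V) : Prop :=
  (∀ u ∈ R, ∀ v ∈ R, u ≠ v → (α : ℕ∞) ≤ G.edist u v) ∧
  (∀ v : V, ∃ u ∈ R, G.edist v u ≤ (β : ℕ∞))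

/-- `F` is an `(α,β)`-ruling edge set of `G`: `F` consists of edges of `G`, any two
distinct edges of `F` are at line-graph distance at least `α`, and every edge of `G`
is at line-graph distance at most `β` from some edge of `F`. -/
def IsRulingEdgeSet {V : Type*} (G : SimpleGraph V) (α β : ℕ) (F : Set (Sym2 V)) : Prop :=
  F ⊆ G.edgeSet ∧
  (∀ e ∈ F, ∀ f ∈ F, e ≠ f → (α : ℕ∞) ≤ edistE G e f) ∧
  (∀ e ∈ G.edgeSet, ∃ f ∈ F, edistE G e f ≤ (β : ℕ∞))

/-- `F` is a `(d,r)`-edge-kernel of `G`: every vertex is incident to at most `d`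
edges of `F` and every edge of `G` is at line-graph distance at most `r` from `F`. -/
def IsEdgeKernel {V : Type*} (G : SimpleGraph V) (d r : ℕ) (F : Set (Sym2 V)) : Prop :=
  F ⊆ G.edgeSet ∧
  (∀ v : V, {e ∈ F | v ∈ e}.ncard ≤ d) ∧
  (∀ e ∈ G.edgeSet, ∃ f ∈ F, edistE G e f ≤ (r : ℕ∞))

lemma edist_le_one_of_mem {V : Type*} {G : SimpleGraph V} {e : Sym2 V}
    (he : e ∈ G.edgeSet) {v u : V} (hv : v ∈ e) (hu : u ∈ e) :
    G.edist v u ≤ 1 := by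
  by_cases h : v = u
  · subst h; simp
  · have : e = s(v, u) := (Sym2.mem_and_mem_iff h).mp ⟨hv, hu⟩
    subst this
    exact (G.edist_eq_one_iff_adj).mpr he |>.le

lemma edistE_le_one {V : Type*} {G : SimpleGraph V} {e f : Sym2 V}
    (he : e ∈ G.edgeSet) (hf : f ∈ G.edgeSet) {v : V} (hv : v ∈ e) (hv' : v ∈ f) :
    edistE G e f ≤ 1 := by
  by_cases h : e = f
  · subst h; simp [edistE]
  · exact ((SimpleGraph.edist_eq_one_iff_adj (G := lineG G)).mpr
      (show (lineG G).Adj e f from ⟨h, he, hf, v, hv, hv'⟩)).le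

-- walk in line graph → vertex distance
lemma walkA {V : Type*} {G : SimpleGraph V} {e f : Sym2 V}
    (p : (lineG G).Walk e f) (he : e ∈ G.edgeSet) {v u : V} (hv : v ∈ e) (hu : u ∈ f) :
    G.edist v u ≤ p.length + 1 := by
  induction p generalizing v with
  | nil => simpa using edist_le_one_of_mem he hv hu
  | @cons e e' f h q ih =>
    obtain ⟨-, he1, he2, w, hw1, hw2⟩ := h
    calc G.edist v u ≤ G.edist v w + G.edist w u := G.edist_triangle
      _ ≤ 1 + (q.length + 1) := add_le_add (edist_le_one_of_mem he1 hv hw1) (ih he2 hw2 hu)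
      _ = (q.length + 1 : ℕ) + 1 := by push_cast; ring

-- walk in G → line graph distance
lemma walkC {V : Type*} {G : SimpleGraph V} {v u : V}
    (p : G.Walk v u) {e f : Sym2 V}
    (he : e ∈ G.edgeSet) (hf : f ∈ G.edgeSet) (hv : v ∈ e) (hu : u ∈ f) :
    edistE G e f ≤ p.length + 1 := by
  induction p generalizing e with
  | nil => simpa using edistE_le_one he hf hv hu
  | @cons v w u h q ih =>
    have he' : s(v, w) ∈ G.edgeSet := h
    calc edistE G e f ≤ (lineG G).edist e s(v, w) + (lineG G).edist s(v, w) f :=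
        SimpleGraph.edist_triangle
      _ ≤ 1 + (q.length + 1) :=
        add_le_add (edistE_le_one he he' hv (Sym2.mem_mk_left v w))
          (ih he' (Sym2.mem_mk_right v w) hu)
      _ = (q.length + 1 : ℕ) + 1 := by push_cast; ring

lemma edist_le_edistE {V : Type*} {G : SimpleGraph V} {e f : Sym2 V}
    (he : e ∈ G.edgeSet) {v u : V} (hv : v ∈ e) (hu : u ∈ f) :
    G.edist v u ≤ edistE G e f + 1 := by
  by_cases h : edistE G e f = ⊤
  · simp [h]
  · obtain ⟨p, hp⟩ := SimpleGraph.exists_walk_of_edist_ne_top h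
    calc G.edist v u ≤ p.length + 1 := walkA p he hv hu
      _ = edistE G e f + 1 := by rw [edistE, hp]

lemma edistE_le_edist {V : Type*} {G : SimpleGraph V} {v u : V} {e f : Sym2 V}
    (he : e ∈ G.edgeSet) (hf : f ∈ G.edgeSet) (hv : v ∈ e) (hu : u ∈ f) :
    edistE G e f ≤ G.edist v u + 1 := by
  by_cases h : G.edist v u = ⊤
  · simp [h]
  · obtain ⟨p, hp⟩ := SimpleGraph.exists_walk_of_edist_ne_top h
    calc edistE G e f ≤ p.length + 1 := walkC p he hf hv hu
      _ = G.edist v u + 1 := by rw [hp]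

lemma isolated_edist {V : Type*} {G : SimpleGraph V} {v u : V}
    (hv : ∀ w : V, ¬ G.Adj v w) (h : v ≠ u) : G.edist v u = ⊤ := by
  apply SimpleGraph.edist_eq_top_of_not_reachable
  rintro ⟨p⟩
  cases p with
  | nil => exact h rfl
  | cons hadj q => exact hv _ hadj

/-- choosing one endpoint of each edge of an `(α,β)`-ruling edge set and
adding all isolated vertices yields an `(α-1, β+1)`-ruling set. -/
theorem stmt0 {V : Type*} [Fintype V] (G : SimpleGraph V) (α β : ℕ)
    (hα : 2 ≤ α) (hβ : 1 ≤ β)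
    (R : Set (Sym2 V)) (hR : IsRulingEdgeSet G α β R)
    (s : Sym2 V → V) (hs : ∀ e ∈ R, s e ∈ e) :
    IsRulingSet G (α - 1) (β + 1)
      ({v : V | ∃ e ∈ R, s e = v} ∪ {v : V | ∀ w : V, ¬ G.Adj v w}) := by
  obtain ⟨hRE, hsep, hcov⟩ := hR
  constructor
  · rintro u (⟨e, heR, hse⟩ | hu) v hv huv
    · rcases hv with ⟨f, hfR, hsf⟩ | hv
      · have hef : e ≠ f := by
          rintro rfl
          exact huv (hse ▸ hsf ▸ rfl)
        have h1 : (α : ℕ∞) ≤ edistE G e f := hsep e heR f hfR hef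
        have h2 : edistE G e f ≤ G.edist u v + 1 :=
          edistE_le_edist (hRE heR) (hRE hfR) (hse ▸ hs e heR) (hsf ▸ hs f hfR)
        cases hd : G.edist u v with
        | top => exact le_top
        | coe n =>
          have h3 := h1.trans h2
          rw [hd] at h3
          have h4 : α ≤ n + 1 := by exact_mod_cast h3
          exact_mod_cast Nat.sub_le_of_le_add h4
      · rw [SimpleGraph.edist_comm, isolated_edist hv (Ne.symm huv)]
        exact le_top
    · rw [isolated_edist hu huv]
      exact le_top
  · intro v
    by_cases hiso : ∀ w : V, ¬ G.Adj v w
    · exact ⟨v, Or.inr hiso, by simp⟩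
    · push_neg at hiso
      obtain ⟨w, hw⟩ := hiso
      have he : s(v, w) ∈ G.edgeSet := hw
      obtain ⟨f, hfR, hd⟩ := hcov _ he
      refine ⟨s f, Or.inl ⟨f, hfR, rfl⟩, ?_⟩
      calc G.edist v (s f) ≤ edistE G s(v, w) f + 1 :=
          edist_le_edistE he (Sym2.mem_mk_left v w) (hs f hfR)
        _ ≤ (β : ℕ∞) + 1 := add_le_add hd le_rfl
        _ = ((β + 1 : ℕ) : ℕ∞) := by push_cast; ring
end

section
/- Let G = (V,E) be a finite simple graph. Let p be a function assigning to every non-isolated vertex v an edge p(v) of G incident to v. Call a vertex u a receiver if there exists a vertex v ≠ u with p(v) = {v,u}. Let a be a function assigning to every receiver u one edge a(u) ∈ { p(v) : v ≠ u, p(v) = {v,u} }. Then the set F = { a(u) : u a receiver } is a (2,2)-edge-kernel of G, i.e., every vertex of G is incident to at most 2 edges of F and every edge of G is at line-graph distance at most 2 from some edge of F. -/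
open SimpleGraph

private lemma edist_le_one_aux {V : Type*} (H : SimpleGraph V) {e f : V}
    (h : e = f ∨ H.Adj e f) : H.edist e f ≤ 1 := by
  rcases h with rfl | h
  · simp [SimpleGraph.edist_self]
  · have := SimpleGraph.edist_le (h.toWalk)
    simpa using this

/-- the proposal technique. Every non-isolated vertex `v` proposes an
incident edge `p v`; a receiver `u` is a vertex that receives a proposal from some
other vertex, and it accepts one received proposal `a u`. The set of accepted edges
is a `(2,2)`-edge-kernel. -/
theorem stmt1 {V : Type*} [Fintype V] (G : SimpleGraph V)
    (p : V → Sym2 V)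
    (hp : ∀ v : V, (∃ w, G.Adj v w) → p v ∈ G.edgeSet ∧ v ∈ p v)
    (receiver : V → Prop)
    (hreceiver : ∀ u : V, receiver u ↔
      ∃ v : V, v ≠ u ∧ (∃ w, G.Adj v w) ∧ p v = s(v, u))
    (a : V → Sym2 V)
    (ha : ∀ u : V, receiver u →
      ∃ v : V, v ≠ u ∧ (∃ w, G.Adj v w) ∧ p v = s(v, u) ∧ a u = p v) :
    IsEdgeKernel G 2 2 {e : Sym2 V | ∃ u : V, receiver u ∧ a u = e} := by
  refine ⟨?_, ?_, ?_⟩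
  · rintro e ⟨u, hu, rfl⟩
    obtain ⟨v, hvu, hni, hpv, hau⟩ := ha u hu
    rw [hau]
    exact (hp v hni).1
  · intro v
    have hsub : {e ∈ {e : Sym2 V | ∃ u : V, receiver u ∧ a u = e} | v ∈ e}
        ⊆ {a v, p v} := by
      rintro e ⟨⟨u, hu, rfl⟩, hv⟩
      obtain ⟨v', hv'u, hni, hpv', hau⟩ := ha u hu
      rw [hau, hpv'] at hv
      rcases Sym2.mem_iff.mp hv with rfl | rfl
      · right
        rw [hau, hpv']
        exact hpv'.symm ▸ rfl
      · left; rfl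
    calc {e ∈ {e : Sym2 V | ∃ u : V, receiver u ∧ a u = e} | v ∈ e}.ncard
        ≤ ({a v, p v} : Set (Sym2 V)).ncard :=
          Set.ncard_le_ncard hsub (Set.toFinite _)
      _ ≤ 2 := by
          refine le_trans (Set.ncard_insert_le _ _) ?_
          simp
  · intro e he
    induction e using Sym2.ind with
    | _ x y =>
    rw [SimpleGraph.mem_edgeSet] at he
    have hni : ∃ w, G.Adj x w := ⟨y, he⟩
    obtain ⟨hpe, hxp⟩ := hp x hni
    obtain ⟨u, hpxu⟩ := Sym2.mem_iff_exists.mp hxp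
    have hadjxu : G.Adj x u := by
      rw [← SimpleGraph.mem_edgeSet, ← hpxu]; exact hpe
    have hxu : x ≠ u := hadjxu.ne
    have hrecu : receiver u := (hreceiver u).mpr ⟨x, hxu, hni, hpxu⟩
    refine ⟨a u, ⟨u, hrecu, rfl⟩, ?_⟩
    obtain ⟨v', hv'u, hni', hpv', hau⟩ := ha u hrecu
    have haue : a u ∈ G.edgeSet := hau ▸ (hp v' hni').1
    have h1 : (lineG G).edist s(x, y) (p x) ≤ 1 := by
      apply edist_le_one_aux
      by_cases hq : s(x, y) = p x
      · exact Or.inl hq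
      · exact Or.inr ⟨hq, (SimpleGraph.mem_edgeSet G).mpr he, hpe, x, Sym2.mem_mk_left x y,
          hxp⟩
    have h2 : (lineG G).edist (p x) (a u) ≤ 1 := by
      apply edist_le_one_aux
      by_cases hq : p x = a u
      · exact Or.inl hq
      · refine Or.inr ⟨hq, hpe, haue, u, ?_, ?_⟩
        · rw [hpxu]; exact Sym2.mem_mk_right x u
        · rw [hau, hpv']; exact Sym2.mem_mk_right v' u
    calc edistE G s(x, y) (a u) ≤ (lineG G).edist s(x, y) (p x) + (lineG G).edist (p x) (a u) :=
          SimpleGraph.edist_triangle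
      _ ≤ 1 + 1 := add_le_add h1 h2
      _ = (2 : ℕ∞) := by norm_num
end

section
/- Let G = (V,E) be a finite simple graph and let R be a 3-ruling edge set of G. For i ∈ ℕ let E_i = { e ∈ E : dist(e,R) = i }. Let c be a function defined on exactly those vertices v that are incident to at least one edge of E₂ and at least one edge of E₃, assigning to each such v an edge c(v) ∈ E₂ incident to v; call the edges in the image of c candidate edges. Let a be a function defined on exactly those vertices u that are incident to at least one candidate edge and to at least one edge of E₁, assigning to each such u a candidate edge a(u) incident to u, and let I be the image of a. Then R ∪ I is a 2-ruling edge set of G. -/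
open SimpleGraph


section Helpers

variable {V : Type*} {G : SimpleGraph V} {R : Set (Sym2 V)} {e f : Sym2 V}

lemma edistE_comm : edistE G e f = edistE G f e := SimpleGraph.edist_comm

lemma edistE_le_one_of_adj (h : (lineG G).Adj e f) : edistE G e f ≤ 1 := by
  have := SimpleGraph.edist_le (SimpleGraph.Walk.cons h SimpleGraph.Walk.nil)
  simpa [edistE] using this

lemma edistE_triangle (g : Sym2 V) : edistE G e f ≤ edistE G e g + edistE G g f :=
  SimpleGraph.edist_triangle

lemma edistSet_le (hf : f ∈ R) : edistSet G e R ≤ edistE G e f := iInf₂_le f hf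

lemma exists_of_edistSet_le {n : ℕ} (h : edistSet G e R ≤ n) :
    ∃ f ∈ R, edistE G e f ≤ n := by
  by_contra hcon
  push_neg at hcon
  have h1 : ((n : ℕ∞) + 1) ≤ edistSet G e R :=
    le_iInf₂ fun f hf => Order.add_one_le_of_lt (hcon f hf)
  have h2 : ((n : ℕ∞) + 1) ≤ (n : ℕ∞) := h1.trans h
  have : (n : ℕ∞) < (n : ℕ∞) + 1 := by
    rw [← Nat.cast_one, ← Nat.cast_add]
    exact_mod_cast Nat.lt_succ_self n
  exact absurd h2 (not_le.mpr this)

lemma step_down {k : ℕ} (h : edistSet G e R = ((k + 1 : ℕ) : ℕ∞)) :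
    ∃ g, (lineG G).Adj e g ∧ edistSet G g R = (k : ℕ∞) := by
  obtain ⟨f, hfR, hfe⟩ := exists_of_edistSet_le (n := k + 1) h.le
  have heq : edistE G e f = ((k + 1 : ℕ) : ℕ∞) :=
    le_antisymm hfe (h ▸ edistSet_le hfR)
  obtain ⟨p, hp⟩ := SimpleGraph.exists_walk_of_edist_eq_coe heq
  cases p with
  | nil => simp at hp
  | @cons _ g _ hadj q =>
    refine ⟨g, hadj, ?_⟩
    have hql : q.length = k := by
      simpa [SimpleGraph.Walk.length_cons] using hp
    have hupper : edistSet G g R ≤ (k : ℕ∞) := by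
      refine le_trans (edistSet_le hfR) ?_
      have := SimpleGraph.edist_le q
      rw [hql] at this
      exact this
    have hlower : (k : ℕ∞) ≤ edistSet G g R := by
      refine le_iInf₂ fun r hr => ?_
      have ht : edistE G e r ≤ edistE G e g + edistE G g r := edistE_triangle g
      have h1 : edistE G e g ≤ 1 := edistE_le_one_of_adj hadj
      have h2 : ((k + 1 : ℕ) : ℕ∞) ≤ 1 + edistE G g r := by
        calc ((k + 1 : ℕ) : ℕ∞) = edistSet G e R := h.symm
        _ ≤ edistE G e r := edistSet_le hr
        _ ≤ edistE G e g + edistE G g r := ht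
        _ ≤ 1 + edistE G g r := add_le_add h1 le_rfl
      have h3 : (1 : ℕ∞) + (k : ℕ∞) ≤ 1 + edistE G g r := by
        refine le_trans (le_of_eq ?_) h2
        push_cast
        ring
      exact (WithTop.add_le_add_iff_left (by exact ENat.one_ne_top)).mp h3
    exact le_antisymm hupper hlower

lemma sym2_mem_cases {z : Sym2 V} {u v w : V} (hu : u ∈ z) (hv : v ∈ z)
    (huv : u ≠ v) (hw : w ∈ z) : w = u ∨ w = v := by
  induction z using Sym2.ind with
  | _ x y =>
    rw [Sym2.mem_iff] at hu hv hw
    rcases hu with rfl | rfl <;> rcases hv with rfl | rfl <;>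
      rcases hw with rfl | rfl <;> tauto

end Helpers

/-- given a `3`-ruling edge set `R`, candidate edges are selected in `E₂`
by vertices incident to `E₂` and `E₃`, then accepted by vertices incident to a candidate
edge and to `E₁`; adding the accepted candidate edges `I` to `R` yields a `2`-ruling
edge set. -/
theorem stmt5 {V : Type*} [Fintype V] (G : SimpleGraph V)
    (R : Set (Sym2 V)) (hR : IsRulingEdgeSet G 2 3 R)
    (Ei : ℕ → Set (Sym2 V))
    (hEi : ∀ i : ℕ, Ei i = {e ∈ G.edgeSet | edistSet G e R = (i : ℕ∞)})
    (cand : V → Prop)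
    (hcand : ∀ v : V, cand v ↔ (∃ g ∈ Ei 2, v ∈ g) ∧ (∃ h ∈ Ei 3, v ∈ h))
    (c : V → Sym2 V)
    (hc : ∀ v : V, cand v → c v ∈ Ei 2 ∧ v ∈ c v)
    (candE : Set (Sym2 V))
    (hcandE : candE = {e : Sym2 V | ∃ v : V, cand v ∧ c v = e})
    (acc : V → Prop)
    (hacc : ∀ u : V, acc u ↔ (∃ e ∈ candE, u ∈ e) ∧ (∃ f ∈ Ei 1, u ∈ f))
    (a : V → Sym2 V)
    (ha : ∀ u : V, acc u → a u ∈ candE ∧ u ∈ a u)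
    (I : Set (Sym2 V))
    (hI : I = {e : Sym2 V | ∃ u : V, acc u ∧ a u = e}) :
    IsRulingEdgeSet G 2 2 (R ∪ I) := by
  obtain ⟨hRsub, hRsep, hRdom⟩ := hR
  -- basic facts about the layers
  have hEsub : ∀ i : ℕ, Ei i ⊆ G.edgeSet := by
    intro i e he
    rw [hEi i] at he
    exact he.1
  have hEdist : ∀ i : ℕ, ∀ e ∈ Ei i, edistSet G e R = (i : ℕ∞) := by
    intro i e he
    rw [hEi i] at he
    exact he.2
  -- candidate edges lie in `Ei 2`
  have hcandE2 : candE ⊆ Ei 2 := by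
    intro e he
    rw [hcandE] at he
    obtain ⟨v, hv, rfl⟩ := he
    exact (hc v hv).1
  -- accepted edges lie in candE
  have hIcand : I ⊆ candE := by
    intro e he
    rw [hI] at he
    obtain ⟨u, hu, rfl⟩ := he
    exact (ha u hu).1
  have hI2 : I ⊆ Ei 2 := fun e he => hcandE2 (hIcand he)
  -- no vertex is both a candidate vertex and an accepting vertex
  have noboth : ∀ v : V, cand v → acc v → False := by
    intro v hcv hav
    obtain ⟨-, h3, hh3, hvh3⟩ := (hcand v).mp hcv
    obtain ⟨-, f1, hf1, hvf1⟩ := (hacc v).mp hav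
    have d3 : edistSet G h3 R = ((3 : ℕ) : ℕ∞) := hEdist 3 h3 hh3
    have d1 : edistSet G f1 R = ((1 : ℕ) : ℕ∞) := hEdist 1 f1 hf1
    have hne : h3 ≠ f1 := by
      rintro rfl
      rw [d3] at d1
      exact absurd d1 (by norm_num)
    have hadj : (lineG G).Adj h3 f1 :=
      ⟨hne, hEsub 3 hh3, hEsub 1 hf1, v, hvh3, hvf1⟩
    obtain ⟨r, hrR, hr1⟩ := exists_of_edistSet_le (n := 1) d1.le
    have : edistSet G h3 R ≤ 2 := by
      refine le_trans (edistSet_le hrR) ?_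
      calc edistE G h3 r ≤ edistE G h3 f1 + edistE G f1 r := edistE_triangle f1
      _ ≤ 1 + 1 := add_le_add (edistE_le_one_of_adj hadj) (by exact_mod_cast hr1)
      _ = 2 := by norm_num
    rw [d3] at this
    exact absurd this (by norm_num)
  refine ⟨?_, ?_, ?_⟩
  · -- subset of the edge set
    rintro e (he | he)
    · exact hRsub he
    · exact hEsub 2 (hI2 he)
  · -- separation
    rintro e (heR | heI) f (hfR | hfI) hne
    · exact hRsep e heR f hfR hne
    · -- e ∈ R, f ∈ I
      have d2 : edistSet G f R = ((2 : ℕ) : ℕ∞) := hEdist 2 f (hI2 hfI)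
      have : ((2 : ℕ) : ℕ∞) ≤ edistE G f e := d2 ▸ edistSet_le heR
      rw [edistE_comm] at this
      exact_mod_cast this
    · -- e ∈ I, f ∈ R
      have d2 : edistSet G e R = ((2 : ℕ) : ℕ∞) := hEdist 2 e (hI2 heI)
      have : ((2 : ℕ) : ℕ∞) ≤ edistE G e f := d2 ▸ edistSet_le hfR
      exact_mod_cast this
    · -- e, f ∈ I : they cannot be adjacent in the line graph
      rw [hI] at heI hfI
      obtain ⟨u₁, hu₁, rfl⟩ := heI
      obtain ⟨u₂, hu₂, rfl⟩ := hfI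
      obtain ⟨he1, hu₁e⟩ := ha u₁ hu₁
      obtain ⟨he2, hu₂e⟩ := ha u₂ hu₂
      rw [hcandE] at he1 he2
      obtain ⟨v₁, hv₁, hcv₁⟩ := he1
      obtain ⟨v₂, hv₂, hcv₂⟩ := he2
      have hv₁e : v₁ ∈ a u₁ := hcv₁ ▸ (hc v₁ hv₁).2
      have hv₂e : v₂ ∈ a u₂ := hcv₂ ▸ (hc v₂ hv₂).2
      by_contra hlt
      push_neg at hlt
      have hpos : 0 < edistE G (a u₁) (a u₂) := by
        have := SimpleGraph.edist_pos_of_ne (G := lineG G) hne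
        exact this
      have hone : edistE G (a u₁) (a u₂) = 1 := by
        have h2 : edistE G (a u₁) (a u₂) < ((2 : ℕ) : ℕ∞) := hlt
        have h2' : edistE G (a u₁) (a u₂) + 1 ≤ 1 + 1 :=
          le_trans (Order.add_one_le_of_lt h2) (by norm_num)
        have hle1 : edistE G (a u₁) (a u₂) ≤ 1 :=
          (WithTop.add_le_add_iff_right (by exact ENat.one_ne_top)).mp h2'
        exact le_antisymm hle1 (by simpa using Order.add_one_le_of_lt hpos)
      have hadj : (lineG G).Adj (a u₁) (a u₂) :=
        SimpleGraph.edist_eq_one_iff_adj.mp hone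
      obtain ⟨-, -, -, w, hw1, hw2⟩ := hadj
      have hne₁ : u₁ ≠ v₁ := fun h => noboth v₁ hv₁ (h ▸ hu₁)
      have hne₂ : u₂ ≠ v₂ := fun h => noboth v₂ hv₂ (h ▸ hu₂)
      rcases sym2_mem_cases hu₁e hv₁e hne₁ hw1 with h1 | h1 <;>
        rcases sym2_mem_cases hu₂e hv₂e hne₂ hw2 with h2 | h2
      · exact hne (by rw [h1.symm.trans h2])
      · exact noboth v₂ hv₂ ((h1.symm.trans h2) ▸ hu₁)
      · exact noboth v₁ hv₁ ((h2.symm.trans h1) ▸ hu₂)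
      · exact hne (by rw [← hcv₁, ← hcv₂, h1.symm.trans h2])
  · -- domination
    intro e he
    by_cases hle : edistSet G e R ≤ ((2 : ℕ) : ℕ∞)
    · obtain ⟨f, hfR, hf⟩ := exists_of_edistSet_le hle
      exact ⟨f, Or.inl hfR, by exact_mod_cast hf⟩
    · -- e is at distance exactly 3
      push_neg at hle
      obtain ⟨f, hfR, hf3⟩ := hRdom e he
      have hle3 : edistSet G e R ≤ ((3 : ℕ) : ℕ∞) :=
        le_trans (edistSet_le hfR) (by exact_mod_cast hf3)
      have d3 : edistSet G e R = ((3 : ℕ) : ℕ∞) :=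
        le_antisymm hle3 (by exact_mod_cast Order.add_one_le_of_lt hle)
      obtain ⟨g, hadj, dg⟩ := step_down (k := 2) (by exact_mod_cast d3)
      obtain ⟨hge, heE, hgE, v, hve, hvg⟩ := hadj
      have hgEi : g ∈ Ei 2 := by
        rw [hEi]
        exact ⟨hgE, by exact_mod_cast dg⟩
      have heEi : e ∈ Ei 3 := by
        rw [hEi]
        exact ⟨he, d3⟩
      have hcv : cand v := (hcand v).mpr ⟨⟨g, hgEi, hvg⟩, ⟨e, heEi, hve⟩⟩
      obtain ⟨hcE2, hvcv⟩ := hc v hcv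
      have hcvcand : c v ∈ candE := by
        rw [hcandE]
        exact ⟨v, hcv, rfl⟩
      have dcv : edistSet G (c v) R = ((2 : ℕ) : ℕ∞) := hEdist 2 (c v) hcE2
      obtain ⟨g', hadj', dg'⟩ := step_down (k := 1) (by exact_mod_cast dcv)
      obtain ⟨-, hcvE, hg'E, u, hucv, hug'⟩ := hadj'
      have hg'Ei : g' ∈ Ei 1 := by
        rw [hEi]
        exact ⟨hg'E, by exact_mod_cast dg'⟩
      have hau : acc u := (hacc u).mpr ⟨⟨c v, hcvcand, hucv⟩, ⟨g', hg'Ei, hug'⟩⟩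
      obtain ⟨hauc, huau⟩ := ha u hau
      have hauI : a u ∈ I := by
        rw [hI]
        exact ⟨u, hau, rfl⟩
      refine ⟨a u, Or.inr hauI, ?_⟩
      -- e and c v share v; c v and a u share u
      have hecv : e ≠ c v := by
        rintro rfl
        rw [d3] at dcv
        exact absurd dcv (by norm_num)
      have hadj1 : (lineG G).Adj e (c v) := ⟨hecv, heE, hcvE, v, hve, hvcv⟩
      by_cases hq : a u = c v
      · rw [hq]
        refine le_trans (edistE_le_one_of_adj hadj1) ?_
        norm_num
      · have hauE : a u ∈ G.edgeSet := hEsub 2 (hcandE2 hauc)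
        have hadj2 : (lineG G).Adj (c v) (a u) :=
          ⟨fun h => hq h.symm, hcvE, hauE, u, hucv, huau⟩
        calc edistE G e (a u) ≤ edistE G e (c v) + edistE G (c v) (a u) :=
              edistE_triangle (c v)
        _ ≤ 1 + 1 := add_le_add (edistE_le_one_of_adj hadj1) (edistE_le_one_of_adj hadj2)
        _ ≤ ((2 : ℕ) : ℕ∞) := by norm_num
end

section
/- Let β ≥ 3 be an integer, let G = (V,E) be a finite simple graph and let R be a β-ruling edge set of G. Let H be the spanning subgraph of G whose edge set is { e ∈ E : dist(e,R) ≤ 3 }, where dist is line-graph distance in G. If S is a 2-ruling edge set of H with R ⊆ S, then S is a (β−1)-ruling edge set of G. -/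
open SimpleGraph

lemma two_le_of_ne {d : ℕ∞} (h0 : d ≠ 0) (h1 : d ≠ 1) : 2 ≤ d := by
  induction d using ENat.recTopCoe with
  | top => exact le_top
  | coe n =>
    have h0' : n ≠ 0 := by exact_mod_cast h0
    have h1' : n ≠ 1 := by exact_mod_cast h1
    exact_mod_cast by omega

lemma walk_split {α : Type*} {G' : SimpleGraph α} {u v : α} (p : G'.Walk u v) :
    ∀ k : ℕ, ∃ w, G'.edist u w ≤ (k : ℕ∞) ∧ G'.edist w v ≤ ((p.length - k : ℕ) : ℕ∞) := by
  induction p with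
  | @nil u => exact fun k => ⟨u, by simp, by simp⟩
  | @cons u x v h q ih =>
    intro k
    cases k with
    | zero => exact ⟨u, by simp, by simpa using (SimpleGraph.Walk.cons h q).edist_le⟩
    | succ k =>
      obtain ⟨w, h1, h2⟩ := ih k
      refine ⟨w, ?_, ?_⟩
      · calc G'.edist u w ≤ G'.edist u x + G'.edist x w := SimpleGraph.edist_triangle
          _ ≤ 1 + k := add_le_add ((edist_eq_one_iff_adj.mpr h).le) h1
          _ = ((k+1 : ℕ) : ℕ∞) := by push_cast; ring
      · simpa [SimpleGraph.Walk.length_cons, Nat.succ_sub_succ] using h2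

lemma edge_of_walk {V : Type*} {G : SimpleGraph V} :
    ∀ {e g : Sym2 V}, (lineG G).Walk e g → e ∈ G.edgeSet → g ∈ G.edgeSet
  | _, _, SimpleGraph.Walk.nil, he => he
  | _, _, SimpleGraph.Walk.cons h q, _ => edge_of_walk q h.2.2.1

/-- if `R` is a `β`-ruling edge set of `G` (`β ≥ 3`), `H` is the spanning
subgraph of `G` on the edges at line-graph distance (in `G`) at most `3` from `R`, and
`S ⊇ R` is a `2`-ruling edge set of `H`, then `S` is a `(β-1)`-ruling edge set of `G`. -/
theorem stmt6 {V : Type*} [Fintype V] (G : SimpleGraph V) (β : ℕ) (hβ : 3 ≤ β)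
    (R : Set (Sym2 V)) (hR : IsRulingEdgeSet G 2 β R)
    (S : Set (Sym2 V)) (hRS : R ⊆ S)
    (hS : IsRulingEdgeSet
      (SimpleGraph.fromEdgeSet {e ∈ G.edgeSet | edistSet G e R ≤ (3 : ℕ∞)}) 2 2 S) :
    IsRulingEdgeSet G 2 (β - 1) S := by
  set H : SimpleGraph V :=
    SimpleGraph.fromEdgeSet {e ∈ G.edgeSet | edistSet G e R ≤ (3 : ℕ∞)} with hHdef
  have hHE : H.edgeSet ⊆ G.edgeSet := by
    rw [hHdef, edgeSet_fromEdgeSet]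
    exact fun e he => he.1.1
  have hmemH : ∀ e ∈ G.edgeSet, ∀ r ∈ R, edistE G e r ≤ (3 : ℕ∞) → e ∈ H.edgeSet := by
    intro e he r hr h3
    rw [hHdef, edgeSet_fromEdgeSet]
    refine ⟨⟨he, ?_⟩, not_isDiag_of_mem_edgeSet G he⟩
    unfold edistSet
    exact le_trans (iInf₂_le r hr) h3
  have hline : lineG H ≤ lineG G := by
    rintro e f ⟨hne, he, hf, hv⟩
    exact ⟨hne, hHE he, hHE hf, hv⟩
  have hmono : ∀ e f, edistE G e f ≤ edistE H e f := fun e f => edist_anti hline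
  obtain ⟨hS1, hS2, hS3⟩ := hS
  refine ⟨fun e he => hHE (hS1 he), ?_, ?_⟩
  · intro e heS f hfS hef
    have hH2 := hS2 e heS f hfS hef
    apply two_le_of_ne
    · rw [Ne, edistE, edist_eq_zero_iff]
      exact hef
    · rw [Ne, edistE, edist_eq_one_iff_adj]
      rintro ⟨hne, -, -, hv⟩
      have hadjH : (lineG H).Adj e f := ⟨hne, hS1 heS, hS1 hfS, hv⟩
      have h1 : edistE H e f = 1 := edist_eq_one_iff_adj.mpr hadjH
      rw [h1] at hH2
      exact absurd hH2 (by norm_num)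
  · intro e he
    obtain ⟨r, hrR, hdist⟩ := hR.2.2 e he
    have hne : edistE G e r ≠ ⊤ := by
      intro h
      rw [h] at hdist
      exact absurd hdist (by simp)
    obtain ⟨n, hn⟩ : ∃ n : ℕ, edistE G e r = (n : ℕ∞) := by
      obtain ⟨n, hn⟩ := WithTop.ne_top_iff_exists.mp hne
      exact ⟨n, by exact_mod_cast hn.symm⟩
    have hn := hn.symm
    have hnβ : n ≤ β := by
      rw [← hn] at hdist
      exact_mod_cast hdist
    have h2β : ((2 : ℕ) : ℕ∞) ≤ ((β - 1 : ℕ) : ℕ∞) := by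
      exact_mod_cast (by omega : 2 ≤ β - 1)
    by_cases hcase : n ≤ 3
    · have heH : e ∈ H.edgeSet := by
        refine hmemH e he r hrR ?_
        rw [← hn]
        exact_mod_cast hcase
      obtain ⟨f, hfS, hf2⟩ := hS3 e heH
      exact ⟨f, hfS, le_trans (le_trans (hmono e f) hf2) h2β⟩
    · obtain ⟨p, hp⟩ := exists_walk_of_edist_eq_coe hn.symm
      obtain ⟨g, hg1, hg2⟩ := walk_split p (n - 3)
      rw [hp] at hg2
      have hg2' : edistE G g r ≤ (3 : ℕ∞) := by
        refine le_trans hg2 ?_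
        exact_mod_cast (by omega : n - (n - 3) ≤ 3)
      have hreach : (lineG G).Reachable e g :=
        reachable_of_edist_ne_top (ne_top_of_le_ne_top (ENat.coe_ne_top _) hg1)
      obtain ⟨q⟩ := hreach
      have hgE : g ∈ G.edgeSet := edge_of_walk q he
      have hgH : g ∈ H.edgeSet := hmemH g hgE r hrR hg2'
      obtain ⟨f, hfS, hf2⟩ := hS3 g hgH
      refine ⟨f, hfS, ?_⟩
      calc edistE G e f ≤ edistE G e g + edistE G g f := SimpleGraph.edist_triangle
        _ ≤ ((n - 3 : ℕ) : ℕ∞) + ((2 : ℕ) : ℕ∞) :=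
            add_le_add hg1 (le_trans (hmono g f) hf2)
        _ = ((n - 3 + 2 : ℕ) : ℕ∞) := by push_cast; ring
        _ ≤ ((β - 1 : ℕ) : ℕ∞) := by exact_mod_cast (by omega : n - 3 + 2 ≤ β - 1)
end

section
/- Let G = (V,E) be a finite simple graph, let Q be a clique edge cover of G of diversity at most d, and let P ⊆ V be a set of vertices with |P ∩ C| ≤ d for every clique C ∈ Q. Then every vertex of P has at most d(d−1) neighbors in P; i.e., the subgraph of G induced by P has maximum degree at most d(d−1) ≤ d². -/
open SimpleGraph

/-- `Q` is a clique edge cover of `H`: every member of `Q` is a clique of `H`, every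
vertex lies in some clique of `Q`, and both endpoints of every edge lie in a common
clique of `Q`. -/
def IsCliqueEdgeCover {W : Type*} (H : SimpleGraph W) (Q : Set (Set W)) : Prop :=
  (∀ C ∈ Q, H.IsClique C) ∧
  (∀ w : W, ∃ C ∈ Q, w ∈ C) ∧
  (∀ u w : W, H.Adj u w → ∃ C ∈ Q, u ∈ C ∧ w ∈ C)

/-- if `Q` is a clique edge cover of diversity at most `d` and `P` contains
at most `d` vertices of each clique of `Q`, then every vertex of `P` has at most
`d(d-1)` neighbors in `P`. -/
theorem stmt8 {V : Type*} [Fintype V] (G : SimpleGraph V)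
    (Q : Set (Set V)) (d : ℕ)
    (hQ : IsCliqueEdgeCover G Q)
    (hdiv : ∀ v : V, {C ∈ Q | v ∈ C}.ncard ≤ d)
    (P : Set V) (hP : ∀ C ∈ Q, (P ∩ C).ncard ≤ d) :
    ∀ v ∈ P, {u ∈ P | G.Adj v u}.ncard ≤ d * (d - 1) := by
  classical
  intro v hv
  set Qv : Set (Set V) := {C ∈ Q | v ∈ C} with hQvdef
  have hQvfin : Qv.Finite := Set.toFinite _
  set t : Finset (Set V) := hQvfin.toFinset with ht
  have hSfin : ∀ s : Set V, s.Finite := fun s => Set.toFinite s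
  -- the neighbor set is contained in the union over cliques containing v
  have hsub : (hSfin {u ∈ P | G.Adj v u}).toFinset ⊆
      t.biUnion (fun C => (hSfin ((P ∩ C) \ {v})).toFinset) := by
    intro u hu
    rw [Set.Finite.mem_toFinset] at hu
    obtain ⟨huP, hadj⟩ := hu
    obtain ⟨C, hCQ, hvC, huC⟩ := hQ.2.2 v u hadj
    refine Finset.mem_biUnion.2 ⟨C, ?_, ?_⟩
    · rw [ht, Set.Finite.mem_toFinset]; exact ⟨hCQ, hvC⟩
    · rw [Set.Finite.mem_toFinset]
      exact ⟨⟨huP, huC⟩, by simp [(G.ne_of_adj hadj).symm]⟩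
  have hbound : ∀ C ∈ t, ((hSfin ((P ∩ C) \ {v})).toFinset).card ≤ d - 1 := by
    intro C hC
    rw [ht, Set.Finite.mem_toFinset] at hC
    have hvin : v ∈ P ∩ C := ⟨hv, hC.2⟩
    have h1 : ((P ∩ C) \ {v}).ncard = (P ∩ C).ncard - 1 :=
      Set.ncard_diff_singleton_of_mem hvin
    have h2 : ((P ∩ C) \ {v}).ncard = ((hSfin ((P ∩ C) \ {v})).toFinset).card :=
      Set.ncard_eq_toFinset_card _ (hSfin _)
    rw [← h2, h1]
    exact Nat.sub_le_sub_right (hP C hC.1) 1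
  have htcard : t.card ≤ d := by
    have := hdiv v
    rwa [Set.ncard_eq_toFinset_card _ hQvfin] at this
  calc ({u ∈ P | G.Adj v u} : Set V).ncard
      = ((hSfin {u ∈ P | G.Adj v u}).toFinset).card := by
        rw [Set.ncard_eq_toFinset_card _ (hSfin _)]
    _ ≤ (t.biUnion (fun C => (hSfin ((P ∩ C) \ {v})).toFinset)).card :=
        Finset.card_le_card hsub
    _ ≤ t.card * (d - 1) := Finset.card_biUnion_le_card_mul _ _ _ hbound
    _ ≤ d * (d - 1) := Nat.mul_le_mul_right _ htcard
end

section
/- Let G = (V,E) be a finite simple graph and Q a clique edge cover of G of diversity at most d, where d ≥ 1. Consider any execution of the following d-phase process. Initially P₀ = V and R₀^C = ∅ for every clique C ∈ Q. In each phase i = 1,…,d: for every clique C ∈ Q with (P_{i−1} ∩ C) \ R_{i−1}^C nonempty, a node p_i^C is chosen from (P_{i−1} ∩ C) \ R_{i−1}^C; S_i is the set of all nodes chosen in phase i; R_i^C = R_{i−1}^C ∪ {p_i^C} for cliques C that chose a node and R_i^C = R_{i−1}^C otherwise; and P_i = S_i ∪ { v ∈ P_{i−1} : no neighbor of v lies in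 S_i }. Then the final set P_d satisfies: (a) |P_d ∩ C| ≤ d for every clique C ∈ Q, and (b) every vertex of G is at distance at most d from some vertex of P_d. In particular, P_d is a (d(d−1), d)-vertex-kernel of G. -/
open SimpleGraph

/-- the `d`-phase proposal process on a graph with a clique edge cover of
diversity at most `d` produces a set `P d` with at most `d` nodes in each clique that
dominates every vertex within distance `d`; in particular `P d` is a
`(d(d-1), d)`-vertex-kernel. -/
theorem stmt9 {V : Type*} [Fintype V] (G : SimpleGraph V)
    (Q : Set (Set V)) (d : ℕ) (hd : 1 ≤ d)
    (hQ : IsCliqueEdgeCover G Q)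
    (hdiv : ∀ v : V, {C ∈ Q | v ∈ C}.ncard ≤ d)
    (P S : ℕ → Set V) (Rc : ℕ → Set V → Set V) (p : ℕ → Set V → V)
    (hP0 : P 0 = Set.univ)
    (hRc0 : ∀ C ∈ Q, Rc 0 C = ∅)
    (hp : ∀ i, 1 ≤ i → i ≤ d → ∀ C ∈ Q,
      ((P (i - 1) ∩ C) \ Rc (i - 1) C).Nonempty →
        p i C ∈ (P (i - 1) ∩ C) \ Rc (i - 1) C)
    (hS : ∀ i, 1 ≤ i → i ≤ d →
      S i = {x : V | ∃ C ∈ Q, ((P (i - 1) ∩ C) \ Rc (i - 1) C).Nonempty ∧ p i C = x})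
    (hRc1 : ∀ i, 1 ≤ i → i ≤ d → ∀ C ∈ Q,
      ((P (i - 1) ∩ C) \ Rc (i - 1) C).Nonempty →
        Rc i C = Rc (i - 1) C ∪ {p i C})
    (hRc2 : ∀ i, 1 ≤ i → i ≤ d → ∀ C ∈ Q,
      ¬ ((P (i - 1) ∩ C) \ Rc (i - 1) C).Nonempty →
        Rc i C = Rc (i - 1) C)
    (hPi : ∀ i, 1 ≤ i → i ≤ d →
      P i = S i ∪ {v ∈ P (i - 1) | ∀ u : V, G.Adj v u → u ∉ S i}) :
    (∀ C ∈ Q, (P d ∩ C).ncard ≤ d) ∧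
    (∀ v : V, ∃ u ∈ P d, G.edist v u ≤ (d : ℕ∞)) ∧
    (∀ v ∈ P d, {u ∈ P d | G.Adj v u}.ncard ≤ d * (d - 1)) := by
  classical
  -- S i ⊆ P (i-1)
  have hSsub : ∀ i, 1 ≤ i → i ≤ d → S i ⊆ P (i - 1) := by
    intro i h1 h2 x hx
    rw [hS i h1 h2] at hx
    obtain ⟨C, hC, hne, hpx⟩ := hx
    exact hpx ▸ (hp i h1 h2 C hC hne).1.1
  -- P is decreasing
  have hPsub : ∀ i, 1 ≤ i → i ≤ d → P i ⊆ P (i - 1) := by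
    intro i h1 h2 x hx
    rw [hPi i h1 h2] at hx
    rcases hx with hx | hx
    · exact hSsub i h1 h2 hx
    · exact hx.1
  have hPmono : ∀ i j, i ≤ j → j ≤ d → P j ⊆ P i := by
    intro i j hij
    induction j, hij using Nat.le_induction with
    | base => intro _; exact subset_rfl
    | succ n hn ih =>
      intro hnd
      have h1 : P (n + 1) ⊆ P n := by
        have := hPsub (n + 1) (by omega) hnd
        simpa using this
      exact h1.trans (ih (by omega))
  -- Rc cardinality bound
  have hRcard : ∀ C ∈ Q, ∀ i, i ≤ d → (Rc i C).ncard ≤ i := by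
    intro C hC i
    induction i with
    | zero => intro _; rw [hRc0 C hC]; simp
    | succ n ih =>
      intro h
      by_cases hne : ((P (n + 1 - 1) ∩ C) \ Rc (n + 1 - 1) C).Nonempty
      · rw [hRc1 (n + 1) (by omega) h C hC hne]
        have h1 : (Rc (n + 1 - 1) C ∪ {p (n + 1) C}).ncard ≤
            (Rc (n + 1 - 1) C).ncard + ({p (n + 1) C} : Set V).ncard :=
          Set.ncard_union_le _ _
        have h2 : (Rc (n + 1 - 1) C).ncard ≤ n := by
          have := ih (by omega); simpa using this
        simp only [Set.ncard_singleton] at h1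
        simp only [Nat.add_sub_cancel] at h1 h2 ⊢
        omega
      · rw [hRc2 (n + 1) (by omega) h C hC hne]
        have := ih (by omega)
        simpa using this.trans (by omega)
  -- Rc is monotone
  have hRmono : ∀ C ∈ Q, ∀ i j, i ≤ j → j ≤ d → Rc i C ⊆ Rc j C := by
    intro C hC i j hij
    induction j, hij using Nat.le_induction with
    | base => intro _; exact subset_rfl
    | succ n hn ih =>
      intro hnd
      have h1 : Rc n C ⊆ Rc (n + 1) C := by
        by_cases hne : ((P (n + 1 - 1) ∩ C) \ Rc (n + 1 - 1) C).Nonempty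
        · rw [hRc1 (n + 1) (by omega) hnd C hC hne]
          simp only [Nat.add_sub_cancel]
          exact Set.subset_union_left
        · rw [hRc2 (n + 1) (by omega) hnd C hC hne, Nat.add_sub_cancel]
      exact (ih (by omega)).trans h1
  -- survivors of a proposing clique are proposers
  have hSurv : ∀ i, 1 ≤ i → i ≤ d → ∀ C ∈ Q,
      ((P (i - 1) ∩ C) \ Rc (i - 1) C).Nonempty → ∀ x ∈ P i, x ∈ C → x ∈ S i := by
    intro i h1 h2 C hC hne x hxP hxC
    rw [hPi i h1 h2] at hxP
    rcases hxP with h | h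
    · exact h
    · have hpm := hp i h1 h2 C hC hne
      have hpS : p i C ∈ S i := by
        rw [hS i h1 h2]; exact ⟨C, hC, hne, rfl⟩
      by_cases hxe : x = p i C
      · rw [hxe]; exact hpS
      · exact absurd hpS (h.2 (p i C) (hQ.1 C hC hxC hpm.1.2 hxe))
  -- Part (a)
  have parta : ∀ C ∈ Q, (P d ∩ C).ncard ≤ d := by
    intro C hC
    by_cases hall : ∀ i, 1 ≤ i → i ≤ d → ((P (i - 1) ∩ C) \ Rc (i - 1) C).Nonempty
    · -- every phase proposes for C; show P d ∩ C ⊆ Rc d C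
      have hsub : P d ∩ C ⊆ Rc d C := by
        intro x hx
        obtain ⟨hxP, hxC⟩ := hx
        -- for each phase i, x is the proposer of some clique containing x
        have hx : ∀ i : ℕ, ∃ C' : Set V, 1 ≤ i → i ≤ d →
            C' ∈ Q ∧ x ∈ C' ∧ x = p i C' ∧ x ∉ Rc (i - 1) C' ∧
            ((P (i - 1) ∩ C') \ Rc (i - 1) C').Nonempty := by
          intro i
          by_cases hi : 1 ≤ i ∧ i ≤ d
          · obtain ⟨h1, h2⟩ := hi
            have hxPi : x ∈ P i := hPmono i d h2 le_rfl hxP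
            have hxS : x ∈ S i := hSurv i h1 h2 C hC (hall i h1 h2) x hxPi hxC
            rw [hS i h1 h2] at hxS
            obtain ⟨C', hC', hne', hpx⟩ := hxS
            have hpm := hp i h1 h2 C' hC' hne'
            exact ⟨C', fun _ _ => ⟨hC', hpx ▸ hpm.1.2, hpx.symm, hpx ▸ hpm.2, hne'⟩⟩
          · exact ⟨∅, fun h1 h2 => absurd ⟨h1, h2⟩ hi⟩
        choose f hf using hx
        -- f is injective on Icc 1 d
        have key2 : ∀ i j, 1 ≤ i → i ≤ d → 1 ≤ j → j ≤ d → i < j → f i ≠ f j := by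
          intro i j hi1 hi2 hj1 hj2 hlt hij
          have hfi := hf i hi1 hi2
          have hfj := hf j hj1 hj2
          rw [hij] at hfi
          have hxin : x ∈ Rc i (f j) := by
            rw [hRc1 i hi1 hi2 (f j) hfj.1 hfi.2.2.2.2]
            right; exact hfi.2.2.1 ▸ rfl
          exact hfj.2.2.2.1
            (hRmono (f j) hfj.1 i (j - 1) (by omega) (by omega) hxin)
        have hinj : Set.InjOn f (Finset.Icc 1 d : Finset ℕ) := by
          intro i hi j hj hij
          simp only [Finset.coe_Icc, Set.mem_Icc] at hi hj
          rcases lt_trichotomy i j with h | h | h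
          · exact absurd hij (key2 i j hi.1 hi.2 hj.1 hj.2 h)
          · exact h
          · exact absurd hij.symm (key2 j i hj.1 hj.2 hi.1 hi.2 h)
        -- the image of f has d elements, all cliques containing x
        set T : Finset (Set V) := (Finset.Icc 1 d).image f with hT
        have hTcard : T.card = d := by
          rw [hT, Finset.card_image_of_injOn hinj, Nat.card_Icc]; omega
        have hTsub : (T : Set (Set V)) ⊆ {C' ∈ Q | x ∈ C'} := by
          intro C' hC'
          simp only [hT, Finset.coe_image, Set.mem_image, Finset.coe_Icc,
            Set.mem_Icc] at hC'
          obtain ⟨i, ⟨h1, h2⟩, rfl⟩ := hC'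
          exact ⟨(hf i h1 h2).1, (hf i h1 h2).2.1⟩
        have hCT : C ∈ T := by
          by_contra hCtT
          have hsub2 : (insert C (T : Set (Set V))) ⊆ {C' ∈ Q | x ∈ C'} := by
            intro C' hC'
            rcases hC' with rfl | hC'
            · exact ⟨hC, hxC⟩
            · exact hTsub hC'
          have h1 : (insert C (T : Set (Set V))).ncard = d + 1 := by
            rw [Set.ncard_insert_of_notMem (by simpa using hCtT) (Set.toFinite _),
              Set.ncard_coe_finset, hTcard]
          have h2 := Set.ncard_le_ncard hsub2 (Set.toFinite _)
          have := hdiv x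
          omega
        simp only [hT, Finset.mem_image, Finset.mem_Icc] at hCT
        obtain ⟨i, ⟨h1, h2⟩, hfi⟩ := hCT
        have hfp := hf i h1 h2
        rw [hfi] at hfp
        have hxin : x ∈ Rc i C := by
          rw [hRc1 i h1 h2 C hC hfp.2.2.2.2]
          right; exact hfp.2.2.1 ▸ rfl
        exact hRmono C hC i d h2 le_rfl hxin
      calc (P d ∩ C).ncard ≤ (Rc d C).ncard := Set.ncard_le_ncard hsub (Set.toFinite _)
        _ ≤ d := hRcard C hC d le_rfl
    · push_neg at hall
      obtain ⟨i, h1, h2, hne⟩ := hall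
      have hsub : P d ∩ C ⊆ Rc (i - 1) C := by
        intro x hx
        have hxP : x ∈ P (i - 1) := hPmono (i - 1) d (by omega) le_rfl hx.1
        by_contra hxR
        have hmem : x ∈ (P (i - 1) ∩ C) \ Rc (i - 1) C := ⟨⟨hxP, hx.2⟩, hxR⟩
        rw [hne] at hmem
        exact hmem
      calc (P d ∩ C).ncard ≤ (Rc (i - 1) C).ncard :=
            Set.ncard_le_ncard hsub (Set.toFinite _)
        _ ≤ i - 1 := hRcard C hC (i - 1) (by omega)
        _ ≤ d := by omega
  -- Part (b): domination
  have hdom : ∀ k, k ≤ d → ∀ v ∈ P (d - k), ∃ u ∈ P d, G.edist v u ≤ (k : ℕ∞) := by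
    intro k
    induction k with
    | zero =>
      intro _ v hv
      refine ⟨v, by simpa using hv, ?_⟩
      simp [SimpleGraph.edist_self]
    | succ k ih =>
      intro hk v hv
      set i := d - k with hi
      have h1 : 1 ≤ i := by omega
      have h2 : i ≤ d := by omega
      have hidx : d - (k + 1) = i - 1 := by omega
      rw [hidx] at hv
      by_cases hvi : v ∈ P i
      · obtain ⟨u, hu, hle⟩ := ih (by omega) v hvi
        refine ⟨u, hu, hle.trans ?_⟩
        exact Nat.cast_le.mpr (Nat.le_succ k)
      · -- v was eliminated: it has a neighbor in S i
        have : ¬ (v ∈ P (i - 1) ∧ ∀ u : V, G.Adj v u → u ∉ S i) := by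
          intro h
          exact hvi (by rw [hPi i h1 h2]; exact Or.inr h)
        push_neg at this
        obtain ⟨u, hadj, huS⟩ := this hv
        have huP : u ∈ P i := by rw [hPi i h1 h2]; exact Or.inl huS
        obtain ⟨w, hw, hle⟩ := ih (by omega) u huP
        refine ⟨w, hw, ?_⟩
        have htr : G.edist v w ≤ G.edist v u + G.edist u w := G.edist_triangle
        have h1e : G.edist v u = 1 := (G.edist_eq_one_iff_adj).mpr hadj
        calc G.edist v w ≤ G.edist v u + G.edist u w := htr
          _ ≤ 1 + (k : ℕ∞) := by
              rw [h1e]; exact add_le_add (le_refl 1) hle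
          _ = ((k + 1 : ℕ) : ℕ∞) := by push_cast; ring
  have partb : ∀ v : V, ∃ u ∈ P d, G.edist v u ≤ (d : ℕ∞) := by
    intro v
    have hv : v ∈ P (d - d) := by simp [hP0]
    exact hdom d le_rfl v hv
  -- Part (c): degree bound
  refine ⟨parta, partb, ?_⟩
  intro v hv
  set Qv := {C ∈ Q | v ∈ C} with hQv
  have hQvfin : Qv.Finite := Set.toFinite _
  have hNsub : {u ∈ P d | G.Adj v u} ⊆ ⋃ C ∈ Qv, ((P d ∩ C) \ {v}) := by
    intro u hu
    obtain ⟨huP, hadj⟩ := hu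
    obtain ⟨C, hC, hvC, huC⟩ := hQ.2.2 v u hadj
    refine Set.mem_biUnion (show C ∈ Qv from ⟨hC, hvC⟩) ?_
    exact ⟨⟨huP, huC⟩, by simp [hadj.ne']⟩
  -- bound via finset biUnion
  have key : ({u ∈ P d | G.Adj v u}).ncard ≤ d * (d - 1) := by
    have hfin : ∀ s : Set V, s.Finite := fun s => Set.toFinite s
    have h1 : ({u ∈ P d | G.Adj v u}).ncard ≤
        (⋃ C ∈ Qv, ((P d ∩ C) \ {v})).ncard :=
      Set.ncard_le_ncard hNsub (Set.toFinite _)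
    have h2 : (⋃ C ∈ Qv, ((P d ∩ C) \ {v})).ncard ≤ d * (d - 1) := by
      have hrw : (⋃ C ∈ Qv, ((P d ∩ C) \ {v})) =
          ⋃ C ∈ hQvfin.toFinset, ((P d ∩ C) \ {v}) := by
        ext y
        simp only [Set.mem_iUnion, Set.Finite.mem_toFinset, exists_prop]
      rw [hrw]
      have hbU : (⋃ C ∈ hQvfin.toFinset, ((P d ∩ C) \ {v})) =
          ↑(hQvfin.toFinset.biUnion (fun C => ((P d ∩ C) \ {v}).toFinset)) := by
        ext x
        simp [Set.mem_toFinset]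
      rw [hbU, Set.ncard_coe_finset]
      calc (hQvfin.toFinset.biUnion fun C => ((P d ∩ C) \ {v}).toFinset).card
          ≤ ∑ C ∈ hQvfin.toFinset, ((P d ∩ C) \ {v}).toFinset.card :=
            Finset.card_biUnion_le
        _ ≤ ∑ _C ∈ hQvfin.toFinset, (d - 1) := by
            apply Finset.sum_le_sum
            intro C hCmem
            rw [Set.Finite.mem_toFinset] at hCmem
            obtain ⟨hCQ, hvC⟩ := hCmem
            have hvin : v ∈ P d ∩ C := ⟨hv, hvC⟩
            have : ((P d ∩ C) \ {v}).ncard = (P d ∩ C).ncard - 1 :=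
              Set.ncard_diff_singleton_of_mem hvin
            rw [← Set.ncard_eq_toFinset_card']
            have := parta C hCQ
            omega
        _ = hQvfin.toFinset.card * (d - 1) := by
            rw [Finset.sum_const, smul_eq_mul]
        _ ≤ d * (d - 1) := by
            apply Nat.mul_le_mul_right
            have : hQvfin.toFinset.card = Qv.ncard := by
              rw [Set.ncard_eq_toFinset_card Qv hQvfin]
            rw [this]
            exact hdiv v
    exact h1.trans h2
  exact key
end

section
/- Let G = (V,E) be a finite simple graph and Q a clique edge cover of G of diversity at most d, where d ≥ 1. Consider any execution of the following d-phase process. Initially P₀ = V and R₀^C = ∅ for every clique C ∈ Q. In each phase i = 1,…,d: for every clique C ∈ Q with (P_{i−1} ∩ C) \ R_{i−1}^C nonempty, a node p_i^C is chosen from (P_{i−1} ∩ C) \ R_{i−1}^C; S_i is the set of all nodes chosen in phase i; R_i^C = R_{i−1}^C ∪ {p_i^C} for cliques C that chose a node and R_i^C = R_{i−1}^C otherwise; and P_i = S_i ∪ { v ∈ P_{i−1} : no neighbor of v lies in S_i }. Then the sets of chosen nodes are nested: S₁ ⊇ S₂ ⊇ … ⊇ S_d. -/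
open SimpleGraph

/-- in the `d`-phase proposal process, the sets of proposed nodes are
nested: `S 1 ⊇ S 2 ⊇ … ⊇ S d`. -/
theorem stmt10 {V : Type*} [Fintype V] (G : SimpleGraph V)
    (Q : Set (Set V)) (d : ℕ) (hd : 1 ≤ d)
    (hQ : IsCliqueEdgeCover G Q)
    (hdiv : ∀ v : V, {C ∈ Q | v ∈ C}.ncard ≤ d)
    (P S : ℕ → Set V) (Rc : ℕ → Set V → Set V) (p : ℕ → Set V → V)
    (hP0 : P 0 = Set.univ)
    (hRc0 : ∀ C ∈ Q, Rc 0 C = ∅)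
    (hp : ∀ i, 1 ≤ i → i ≤ d → ∀ C ∈ Q,
      ((P (i - 1) ∩ C) \ Rc (i - 1) C).Nonempty →
        p i C ∈ (P (i - 1) ∩ C) \ Rc (i - 1) C)
    (hS : ∀ i, 1 ≤ i → i ≤ d →
      S i = {x : V | ∃ C ∈ Q, ((P (i - 1) ∩ C) \ Rc (i - 1) C).Nonempty ∧ p i C = x})
    (hRc1 : ∀ i, 1 ≤ i → i ≤ d → ∀ C ∈ Q,
      ((P (i - 1) ∩ C) \ Rc (i - 1) C).Nonempty →
        Rc i C = Rc (i - 1) C ∪ {p i C})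
    (hRc2 : ∀ i, 1 ≤ i → i ≤ d → ∀ C ∈ Q,
      ¬ ((P (i - 1) ∩ C) \ Rc (i - 1) C).Nonempty →
        Rc i C = Rc (i - 1) C)
    (hPi : ∀ i, 1 ≤ i → i ≤ d →
      P i = S i ∪ {v ∈ P (i - 1) | ∀ u : V, G.Adj v u → u ∉ S i}) :
    ∀ i, 1 ≤ i → i + 1 ≤ d → S (i + 1) ⊆ S i := by
  intro i hi hid x hx
  have hi1 : 1 ≤ i + 1 := by omega
  rw [hS (i + 1) hi1 hid] at hx
  obtain ⟨C, hCQ, hne, hpx⟩ := hx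
  have hpmem := hp (i + 1) hi1 hid C hCQ hne
  simp only [Nat.add_sub_cancel] at hpmem
  rw [hpx] at hpmem
  obtain ⟨⟨hxPi, hxC⟩, hxR⟩ := hpmem
  by_contra hxs
  rw [hPi i hi (by omega)] at hxPi
  rcases hxPi with h | h
  · exact hxs h
  · obtain ⟨hxP, hno⟩ := h
    by_cases hne' : ((P (i - 1) ∩ C) \ Rc (i - 1) C).Nonempty
    · have hpi := hp i hi (by omega) C hCQ hne'
      have hpiS : p i C ∈ S i := by
        rw [hS i hi (by omega)]; exact ⟨C, hCQ, hne', rfl⟩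
      by_cases heq : p i C = x
      · exact hxs (heq ▸ hpiS)
      · have hadj : G.Adj x (p i C) :=
          hQ.1 C hCQ hxC hpi.1.2 (fun h => heq h.symm)
        exact hno _ hadj hpiS
    · rw [hRc2 i hi (by omega) C hCQ hne'] at hxR
      exact hne' ⟨x, ⟨hxP, hxC⟩, hxR⟩
end

section
/- Let G = (V,E) be a finite simple graph, let α ≥ 2, B ≥ 2 and L ≥ 1 be integers, and let c : V → {0,…,B−1}^L be a labeling such that any two distinct vertices u ≠ v with dist(u,v) ≤ α−1 satisfy c(u) ≠ c(v). Define R₀ = V and, for i = 1,…,L, define R_i from R_{i−1} as follows: let T_b = { v ∈ R_{i−1} : the i-th digit of c(v) equals b } for b = 0,…,B−1; set K₀ = T₀ and, for b = 1,…,B−1, K_b = { v ∈ T_b : every u ∈ K₀ ∪ … ∪ K_{b−1} satisfies dist(u,v) ≥ α }; and let R_i = K₀ ∪ … ∪ K_{B−1}. Then R_L is an (α, (α−1)·L)-ruling set of G: any two distinct vertices of R_L are at distance at least α in G, and every vertex of G is at distance at most (α−1)·L from some vertex of R_L. -/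
open SimpleGraph

/-- the digit-wise sparsification algorithm. The vertices carry labels
`c v : ℕ → ℕ` with digits `c v 0, …, c v (L-1)` in `{0, …, B-1}` such that vertices at
distance at most `α - 1` have distinct labels. Starting from `R 0 = V`, phase `i`
(for `i = 1, …, L`) splits `R (i-1)` according to digit `i - 1` into sets `T b`,
keeps `K i 0 = T 0`, keeps from each `T b` the vertices at distance at least `α`
from all previously kept vertices, and sets `R i` to be the union of the kept sets.
The final set `R L` is an `(α, (α-1)·L)`-ruling set of `G`. -/
theorem stmt15 {V : Type*} [Fintype V] (G : SimpleGraph V) (α B L : ℕ)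
    (hα : 2 ≤ α) (hB : 2 ≤ B) (hL : 1 ≤ L)
    (c : V → ℕ → ℕ)
    (hcB : ∀ v : V, ∀ i < L, c v i < B)
    (hc : ∀ u v : V, u ≠ v → G.edist u v ≤ ((α - 1 : ℕ) : ℕ∞) →
      ∃ i < L, c u i ≠ c v i)
    (R : ℕ → Set V) (K : ℕ → ℕ → Set V)
    (hR0 : R 0 = Set.univ)
    (hK0 : ∀ i, 1 ≤ i → i ≤ L →
      K i 0 = {v ∈ R (i - 1) | c v (i - 1) = 0})
    (hKb : ∀ i, 1 ≤ i → i ≤ L → ∀ b, 1 ≤ b → b ≤ B - 1 →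
      K i b = {v ∈ R (i - 1) | c v (i - 1) = b ∧
        ∀ a < b, ∀ u ∈ K i a, (α : ℕ∞) ≤ G.edist u v})
    (hRi : ∀ i, 1 ≤ i → i ≤ L →
      R i = {v : V | ∃ b ≤ B - 1, v ∈ K i b}) :
    IsRulingSet G α ((α - 1) * L) (R L) := by

  -- Membership in `K (i+1) b` forces membership in `R i` and digit `b`.
  have hKmem : ∀ i, i + 1 ≤ L → ∀ b ≤ B - 1, ∀ v ∈ K (i+1) b,
      v ∈ R i ∧ c v i = b := by
    intro i hi b hb v hv
    rcases Nat.eq_zero_or_pos b with h0 | h1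
    · subst h0
      rw [hK0 (i+1) (by omega) hi] at hv
      simpa using hv
    · rw [hKb (i+1) (by omega) hi b h1 hb] at hv
      simp only [Nat.add_sub_cancel, Set.mem_setOf_eq] at hv
      exact ⟨hv.1, hv.2.1⟩
  have hsub : ∀ i, i + 1 ≤ L → R (i+1) ⊆ R i := by
    intro i hi v hv
    rw [hRi (i+1) (by omega) hi] at hv
    obtain ⟨b, hb, hvb⟩ := hv
    exact (hKmem i hi b hb v hvb).1
  have hchain : ∀ k, k ≤ L → ∀ j, j ≤ k → R k ⊆ R j := by
    intro k
    induction k with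
    | zero => intro _ j hj; interval_cases j; exact subset_rfl
    | succ k ih =>
      intro hk j hj
      rcases Nat.eq_or_lt_of_le hj with h | h
      · subst h; exact subset_rfl
      · exact (hsub k hk).trans (ih (by omega) j (by omega))
  constructor
  · -- sparsity
    intro u hu v hv huv
    by_contra hlt
    push_neg at hlt
    have hfin : G.edist u v ≠ ⊤ := (hlt.trans_le le_top).ne
    obtain ⟨n, hn⟩ := WithTop.ne_top_iff_exists.mp hfin
    have hnα : n < α := by rw [← hn] at hlt; exact Nat.cast_lt.mp hlt
    have hle : G.edist u v ≤ ((α - 1 : ℕ) : ℕ∞) := by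
      rw [← hn]; exact Nat.cast_le.mpr (Nat.le_sub_one_of_lt hnα)
    obtain ⟨i, hiL, hdig⟩ := hc u v huv hle
    have hu' : u ∈ R (i+1) := hchain L le_rfl (i+1) (by omega) hu
    have hv' : v ∈ R (i+1) := hchain L le_rfl (i+1) (by omega) hv
    rw [hRi (i+1) (by omega) (by omega)] at hu' hv'
    obtain ⟨bu, hbu, hub⟩ := hu'
    obtain ⟨bv, hbv, hvb⟩ := hv'
    have hcu := (hKmem i (by omega) bu hbu u hub).2
    have hcv := (hKmem i (by omega) bv hbv v hvb).2
    have hbne : bu ≠ bv := by rw [← hcu, ← hcv]; exact hdig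
    rcases Nat.lt_or_ge bu bv with hb | hb
    · rw [hKb (i+1) (by omega) (by omega) bv (by omega) hbv] at hvb
      simp only [Nat.add_sub_cancel, Set.mem_setOf_eq] at hvb
      exact absurd (hvb.2.2 bu hb u hub) (not_le.mpr hlt)
    · have hb' : bv < bu := by omega
      rw [hKb (i+1) (by omega) (by omega) bu (by omega) hbu] at hub
      simp only [Nat.add_sub_cancel, Set.mem_setOf_eq] at hub
      have := hub.2.2 bv hb' v hvb
      rw [G.edist_comm] at this
      exact absurd this (not_le.mpr hlt)
  · -- covering
    have cov : ∀ i ≤ L, ∀ v : V, ∃ u ∈ R i, G.edist v u ≤ (((α - 1) * i : ℕ) : ℕ∞) := by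
      intro i
      induction i with
      | zero =>
        intro _ v
        exact ⟨v, by rw [hR0]; trivial, by simp⟩
      | succ i ih =>
        intro hiL v
        obtain ⟨u, hu, hdu⟩ := ih (by omega) v
        by_cases h1 : u ∈ R (i+1)
        · refine ⟨u, h1, hdu.trans ?_⟩
          exact_mod_cast Nat.mul_le_mul_left (α - 1) (Nat.le_succ i)
        · have hbB : c u i ≤ B - 1 := by have := hcB u i (by omega); omega
          have hpos : 1 ≤ c u i := by
            by_contra h0
            apply h1
            rw [hRi (i+1) (by omega) hiL]
            refine ⟨0, by omega, ?_⟩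
            rw [hK0 (i+1) (by omega) hiL]
            simp only [Nat.add_sub_cancel, Set.mem_setOf_eq]
            exact ⟨hu, by omega⟩
          have hnot : u ∉ K (i+1) (c u i) := by
            intro hk
            apply h1
            rw [hRi (i+1) (by omega) hiL]
            exact ⟨c u i, hbB, hk⟩
          rw [hKb (i+1) (by omega) hiL (c u i) hpos hbB] at hnot
          simp only [Nat.add_sub_cancel, Set.mem_setOf_eq, not_and, not_forall, not_le] at hnot
          obtain ⟨a, ha, w, hw, hdw⟩ := hnot hu trivial
          have hwR : w ∈ R (i+1) := by
            rw [hRi (i+1) (by omega) hiL]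
            exact ⟨a, by omega, hw⟩
          have hwfin : G.edist w u ≠ ⊤ := (hdw.trans_le le_top).ne
          obtain ⟨n, hn⟩ := WithTop.ne_top_iff_exists.mp hwfin
          have hnα : n < α := by rw [← hn] at hdw; exact Nat.cast_lt.mp hdw
          have hle : G.edist u w ≤ ((α - 1 : ℕ) : ℕ∞) := by
            rw [G.edist_comm, ← hn]
            exact Nat.cast_le.mpr (Nat.le_sub_one_of_lt hnα)
          refine ⟨w, hwR, ?_⟩
          calc G.edist v w ≤ G.edist v u + G.edist u w := G.edist_triangle
            _ ≤ (((α - 1) * i : ℕ) : ℕ∞) + ((α - 1 : ℕ) : ℕ∞) := add_le_add hdu hle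
            _ = (((α - 1) * (i + 1) : ℕ) : ℕ∞) := by
                rw [← Nat.cast_add]
                exact congrArg _ (by ring)
    exact fun v => cov L le_rfl v
end

section
/- Let G = (V,E) be a finite simple graph, let F be a (2,2)-edge-kernel of G, and let M ⊆ F be a maximal matching of the spanning subgraph H = (V,F), i.e., a set of pairwise non-adjacent edges of F such that every edge of F either lies in M or shares an endpoint with some edge of M. Then M is a (2,3)-ruling edge set of G. -/
open SimpleGraph

/-- a maximal matching of the spanning subgraph on a `(2,2)`-edge-kernel
is a `(2,3)`-ruling edge set of the whole graph. -/
theorem stmt16 {V : Type*} [Fintype V] (G : SimpleGraph V)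
    (F : Set (Sym2 V)) (hF : IsEdgeKernel G 2 2 F)
    (M : Set (Sym2 V)) (hMF : M ⊆ F)
    (hmatch : ∀ e ∈ M, ∀ f ∈ M, e ≠ f → ¬ ∃ v : V, v ∈ e ∧ v ∈ f)
    (hmax : ∀ e ∈ F, e ∈ M ∨ ∃ f ∈ M, ∃ v : V, v ∈ e ∧ v ∈ f) :
    IsRulingEdgeSet G 2 3 M := by
  obtain ⟨hFE, hdeg, hcov⟩ := hF
  have hME : M ⊆ G.edgeSet := fun e he => hFE (hMF he)
  refine ⟨hME, ?_, ?_⟩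
  · intro e he f hf hne
    have h0 : edistE G e f ≠ 0 := by
      simpa [edistE, SimpleGraph.edist_eq_zero_iff] using hne
    have h1 : edistE G e f ≠ 1 := by
      intro h
      exact hmatch e he f hf hne ((edist_eq_one_iff_adj.mp h).2.2.2)
    cases hd : edistE G e f with
    | top => exact le_top
    | coe n =>
      rw [hd] at h0 h1
      have : 2 ≤ n := by
        rcases n with _ | _ | n
        · simp at h0
        · simp at h1
        · omega
      exact_mod_cast this
  · intro e he
    obtain ⟨f, hfF, hef⟩ := hcov e he
    rcases hmax f hfF with hfM | ⟨m, hmM, v, hvf, hvm⟩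
    · exact ⟨f, hfM, le_trans hef (by norm_num)⟩
    · refine ⟨m, hmM, ?_⟩
      have hfm : edistE G f m ≤ 1 := by
        rcases eq_or_ne f m with rfl | hne
        · simp [edistE]
        · exact le_of_eq (edist_eq_one_iff_adj.mpr ⟨hne, hFE hfF, hME hmM, v, hvf, hvm⟩)
      calc edistE G e m ≤ edistE G e f + edistE G f m := SimpleGraph.edist_triangle
        _ ≤ 2 + 1 := add_le_add hef hfm
        _ = 3 := by norm_num
end
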